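/- Let X ∈ ℝ^{n×d} be full rank and d ≤ s ≤ n. If S ⊆ {1..n} is sampled with probability P(S) = det(X_S^⊤X_S) / ((n−d choose s−d) det(X^⊤X)) over subsets of size s, then for any fixed index i ∈ {1..n}, the marginal probability satisfies P(i ∈ S) = (s−d)/(n−d) + ((n−s)/(n−d)) · x_i^⊤(X^⊤X)^{−1}x_i. -/

import Mathlib

open Matrix Finset Function

noncomputable section

variable {d : ℕ} {m : Type*} [Fintype m] [DecidableEq m] [LinearOrder m]

noncomputable section

omit [DecidableEq m] [LinearOrder m] in
theorem det_mul_expand (A : Matrix (Fin d) m ℝ) (B : Matrix m (Fin d) ℝ) :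
    (A * B).det = ∑ f : Fin d → m, (∏ j, A j (f j)) * (B.submatrix f id).det := by
  have h1 : (A * B).det =
      (Matrix.detRowAlternating : ((Fin d → ℝ) [⋀^Fin d]→ₗ[ℝ] ℝ)).toMultilinearMap
        (fun j => ∑ k, A j k • B k) := by
    show (A * B).det = Matrix.detRowAlternating (fun j => ∑ k, A j k • B k)
    congr 1
    ext j l
    simp [Matrix.mul_apply]
  rw [h1, MultilinearMap.map_sum]
  refine Finset.sum_congr rfl fun f _ => ?_
  rw [show (fun j => A j (f j) • B (f j)) = (fun j => A j (f j) • (fun j' => B (f j')) j) from rfl,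
    MultilinearMap.map_smul_univ]
  rfl

theorem perm_sum_eval (A : Matrix (Fin d) m ℝ) (B : Matrix m (Fin d) ℝ)
    (T : Finset m) (hT : T.card = d) :
    ∑ f ∈ ((univ : Finset (Fin d → m)).filter Injective).filter
      (fun f => Finset.image f univ = T), (∏ j, A j (f j)) * (B.submatrix f id).det
      = (A.submatrix id (T.orderEmbOfFin hT)).det * (B.submatrix (T.orderEmbOfFin hT) id).det := by
  set e : Fin d → m := ⇑(T.orderEmbOfFin hT) with he
  have einj : Injective e := (T.orderEmbOfFin hT).injective
  have hmem' : ∀ σ : Equiv.Perm (Fin d), Finset.image (e ∘ σ) univ = T := by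
    intro σ
    apply Finset.eq_of_subset_of_card_le
    · intro x hx
      simp only [Finset.mem_image] at hx
      obtain ⟨j, _, rfl⟩ := hx
      exact Finset.orderEmbOfFin_mem T hT (σ j)
    · rw [hT, Finset.card_image_of_injective _ (einj.comp σ.injective), Finset.card_univ,
        Fintype.card_fin]
  have step : ∑ f ∈ ((univ : Finset (Fin d → m)).filter Injective).filter
      (fun f => Finset.image f univ = T), (∏ j, A j (f j)) * (B.submatrix f id).det
      = ∑ σ : Equiv.Perm (Fin d), (∏ j, A j (e (σ j))) * (B.submatrix (e ∘ σ) id).det := by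
    symm
    apply Finset.sum_bij (i := fun (σ : Equiv.Perm (Fin d)) (_ : σ ∈ univ) => e ∘ σ)
    · intro σ _
      simp only [Finset.mem_filter, Finset.mem_univ, true_and]
      exact ⟨einj.comp σ.injective, hmem' σ⟩
    · intro σ _ τ _ hst
      ext j
      exact congrArg Fin.val (einj (congrFun hst j))
    · intro f hf
      rw [Finset.mem_filter, Finset.mem_filter] at hf
      obtain ⟨⟨-, hinj⟩, himg⟩ := hf
      have hmemT : ∀ j, f j ∈ T := fun j => himg ▸ Finset.mem_image_of_mem f (Finset.mem_univ j)
      set g : Fin d → Fin d := fun j => (T.orderIsoOfFin hT).symm ⟨f j, hmemT j⟩ with hg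
      have hge : ∀ j, e (g j) = f j := by
        intro j
        show (T.orderEmbOfFin hT) ((T.orderIsoOfFin hT).symm ⟨f j, hmemT j⟩) = f j
        rw [← Finset.coe_orderIsoOfFin_apply]
        simp
      have hginj : Injective g := fun a b hab => hinj (by rw [← hge a, ← hge b, hab])
      refine ⟨Equiv.ofBijective g (Finite.injective_iff_bijective.mp hginj), Finset.mem_univ _, ?_⟩
      exact funext fun j => hge j
    · intro σ _
      rfl
  rw [step]
  have detB : ∀ σ : Equiv.Perm (Fin d), (B.submatrix (e ∘ σ) id).det
      = (Equiv.Perm.sign σ : ℝ) * (B.submatrix e id).det := fun σ =>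
    Matrix.det_permute σ (B.submatrix e id)
  calc ∑ σ : Equiv.Perm (Fin d), (∏ j, A j (e (σ j))) * (B.submatrix (e ∘ σ) id).det
      = (∑ σ : Equiv.Perm (Fin d), Equiv.Perm.sign σ • ∏ j, A j (e (σ j)))
        * (B.submatrix e id).det := by
        rw [Finset.sum_mul]
        refine Finset.sum_congr rfl fun σ _ => ?_
        rw [detB σ]
        simp only [Units.smul_def, zsmul_eq_mul]
        push_cast
        ring
    _ = (A.submatrix id e).det * (B.submatrix e id).det := by
        congr 1
        rw [← Matrix.det_transpose (A.submatrix id e), Matrix.det_apply]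
        rfl

theorem cauchyBinet (A : Matrix (Fin d) m ℝ) (B : Matrix m (Fin d) ℝ) :
    (A * B).det = ∑ T ∈ powersetCard d (univ : Finset m),
      if h : T.card = d then
        (A.submatrix id (T.orderEmbOfFin h)).det * (B.submatrix (T.orderEmbOfFin h) id).det
      else 0 := by
  rw [det_mul_expand]
  rw [← Finset.sum_filter_add_sum_filter_not (univ : Finset (Fin d → m)) Injective]
  have hnoninj : ∑ f ∈ (univ : Finset (Fin d → m)).filter (fun f => ¬ Injective f),
      (∏ j, A j (f j)) * (B.submatrix f id).det = 0 := by
    refine Finset.sum_eq_zero fun f hf => ?_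
    rw [Finset.mem_filter] at hf
    have h0 : (B.submatrix f id).det = 0 := by
      have hni : ¬ Injective (fun j => B (f j)) := by
        intro hinj
        exact hf.2 fun a b hab => hinj (show B (f a) = B (f b) by rw [hab])
      exact (Matrix.detRowAlternating :
        ((Fin d → ℝ) [⋀^Fin d]→ₗ[ℝ] ℝ)).map_eq_zero_of_not_injective _ hni
    rw [h0, mul_zero]
  rw [hnoninj, add_zero]
  have hmaps : ∀ f ∈ (univ : Finset (Fin d → m)).filter Injective,
      Finset.image f univ ∈ powersetCard d (univ : Finset m) := by
    intro f hf
    rw [Finset.mem_filter] at hf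
    rw [Finset.mem_powersetCard]
    exact ⟨Finset.subset_univ _, by
      rw [Finset.card_image_of_injective _ hf.2, Finset.card_univ, Fintype.card_fin]⟩
  rw [← Finset.sum_fiberwise_of_maps_to hmaps
    (fun f => (∏ j, A j (f j)) * (B.submatrix f id).det)]
  refine Finset.sum_congr rfl fun T hT => ?_
  have hTcard : T.card = d := (Finset.mem_powersetCard.mp hT).2
  rw [dif_pos hTcard, ← perm_sum_eval A B T hTcard]

/-- The submatrix of `X` consisting of the rows indexed by the subset `S`. -/
def rowSub {n d : ℕ} (X : Matrix (Fin n) (Fin d) ℝ) (S : Finset (Fin n)) :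
    Matrix {i // i ∈ S} (Fin d) ℝ :=
  X.submatrix (fun i => (i : Fin n)) id

/-- `X_S^⊤ X_S`. -/
def gram {n d : ℕ} (X : Matrix (Fin n) (Fin d) ℝ) (S : Finset (Fin n)) :
    Matrix (Fin d) (Fin d) ℝ :=
  (rowSub X S)ᵀ * rowSub X S

/-- the `d × d` minor of `X` given by rows `T` -/
def mnr {n d : ℕ} (X : Matrix (Fin n) (Fin d) ℝ) (T : Finset (Fin n)) : ℝ :=
  if h : T.card = d then (X.submatrix (T.orderEmbOfFin h) id).det else 0

theorem detG_eq {n d : ℕ} (X : Matrix (Fin n) (Fin d) ℝ) :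
    (Xᵀ * X).det = ∑ T ∈ powersetCard d (univ : Finset (Fin n)), (mnr X T)^2 := by
  rw [cauchyBinet]
  refine Finset.sum_congr rfl fun T hT => ?_
  have hTc : T.card = d := (Finset.mem_powersetCard.mp hT).2
  rw [dif_pos hTc, mnr, dif_pos hTc]
  have : Xᵀ.submatrix id (T.orderEmbOfFin hTc) = (X.submatrix (T.orderEmbOfFin hTc) id)ᵀ := rfl
  rw [this, Matrix.det_transpose, sq]

theorem gram_det {n d : ℕ} (X : Matrix (Fin n) (Fin d) ℝ) (S : Finset (Fin n)) :
    (gram X S).det = ∑ T ∈ powersetCard d S, (mnr X T)^2 := by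
  rw [_root_.gram, cauchyBinet]
  have hattach : (univ : Finset {i // i ∈ S}) = S.attach := Finset.univ_eq_attach S
  have hmap : powersetCard d S = (powersetCard d (univ : Finset {i // i ∈ S})).map
      (Finset.mapEmbedding (Function.Embedding.subtype _)).toEmbedding := by
    rw [hattach, ← Finset.powersetCard_map, Finset.attach_map_val]
  rw [hmap, Finset.sum_map]
  refine Finset.sum_congr rfl fun T' hT' => ?_
  have hT'c : T'.card = d := (Finset.mem_powersetCard.mp hT').2
  set e' := T'.orderEmbOfFin hT'c with he'
  rw [dif_pos hT'c]
  have h1 : (rowSub X S)ᵀ.submatrix id e' = ((rowSub X S).submatrix e' id)ᵀ := rfl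
  rw [h1, Matrix.det_transpose]
  have h2 : (rowSub X S).submatrix (⇑e') id
      = X.submatrix (fun j => ((e' j : {i // i ∈ S}) : Fin n)) id := rfl
  set Tm : Finset (Fin n) := T'.map (Function.Embedding.subtype _) with hTm
  have hTmc : Tm.card = d := by rw [hTm, Finset.card_map, hT'c]
  have hfun : (fun j => ((e' j : {i // i ∈ S}) : Fin n)) = ⇑(Tm.orderEmbOfFin hTmc) := by
    apply Finset.orderEmbOfFin_unique
    · intro x
      rw [hTm, Finset.mem_map]
      exact ⟨e' x, Finset.orderEmbOfFin_mem T' hT'c x, rfl⟩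
    · intro a b hab
      exact e'.strictMono hab
  have : (Finset.mapEmbedding (Function.Embedding.subtype fun i => i ∈ S)).toEmbedding T' = Tm :=
    rfl
  rw [this, mnr, dif_pos hTmc, h2, hfun, sq]

theorem card_supersets {n : ℕ} (A : Finset (Fin n)) {s : ℕ} (hA : A.card ≤ s) :
    ((powersetCard s (univ : Finset (Fin n))).filter (fun S => A ⊆ S)).card
      = (n - A.card).choose (s - A.card) := by
  have key : ((powersetCard s (univ : Finset (Fin n))).filter (fun S => A ⊆ S)).card
      = (powersetCard (s - A.card) Aᶜ).card := by
    apply Finset.card_bij' (i := fun S _ => S \ A) (j := fun U _ => U ∪ A)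
    · intro S hS
      rw [Finset.mem_filter, Finset.mem_powersetCard_univ] at hS
      rw [Finset.mem_powersetCard]
      refine ⟨fun x hx => ?_, ?_⟩
      · rw [Finset.mem_sdiff] at hx
        rw [Finset.mem_compl]
        exact hx.2
      · rw [Finset.card_sdiff_of_subset hS.2, hS.1]
    · intro U hU
      rw [Finset.mem_powersetCard] at hU
      have hdisj : Disjoint U A := fun V hVU hVA => by
        intro x hx
        have h1 := hU.1 (hVU hx)
        rw [Finset.mem_compl] at h1
        exact absurd (hVA hx) h1
      rw [Finset.mem_filter, Finset.mem_powersetCard_univ]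
      refine ⟨?_, Finset.subset_union_right⟩
      rw [Finset.card_union_of_disjoint hdisj, hU.2, Nat.sub_add_cancel hA]
    · intro S hS
      rw [Finset.mem_filter] at hS
      exact Finset.sdiff_union_of_subset hS.2
    · intro U hU
      rw [Finset.mem_powersetCard] at hU
      have hdisj : Disjoint U A := fun V hVU hVA => by
        intro x hx
        have h1 := hU.1 (hVU hx)
        rw [Finset.mem_compl] at h1
        exact absurd (hVA hx) h1
      rw [Finset.union_sdiff_cancel_right hdisj]
  rw [key, Finset.card_powersetCard, Finset.card_compl, Fintype.card_fin]

theorem swap_sum {n d : ℕ} (𝒮 : Finset (Finset (Fin n))) (f : Finset (Fin n) → ℝ) :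
    ∑ S ∈ 𝒮, ∑ T ∈ powersetCard d S, f T
      = ∑ T ∈ powersetCard d (univ : Finset (Fin n)),
          ((𝒮.filter (fun S => T ⊆ S)).card : ℝ) * f T := by
  have h1 : ∀ S ∈ 𝒮, ∑ T ∈ powersetCard d S, f T
      = ∑ T ∈ powersetCard d (univ : Finset (Fin n)), if T ⊆ S then f T else 0 := by
    intro S _
    rw [← Finset.sum_filter]
    congr 1
    ext T
    simp only [Finset.mem_powersetCard, Finset.mem_filter, Finset.subset_univ, true_and]
    tauto
  rw [Finset.sum_congr rfl h1, Finset.sum_comm]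
  refine Finset.sum_congr rfl fun T _ => ?_
  rw [← Finset.sum_filter, Finset.sum_const, nsmul_eq_mul]

theorem isUnit_detG {n d : ℕ} (X : Matrix (Fin n) (Fin d) ℝ) (hrank : X.rank = d) :
    IsUnit (Xᵀ * X).det := by
  have hr : (Xᵀ * X).rank = d := by rw [Matrix.rank_transpose_mul_self, hrank]
  set B := Xᵀ * X with hB
  -- rank d square matrix: mulVecLin surjective hence injective
  have hsurj : Function.Surjective B.mulVecLin := by
    rw [← LinearMap.range_eq_top]
    apply Submodule.eq_top_of_finrank_eq
    rw [← Matrix.rank, hr, Module.finrank_fintype_fun_eq_card, Fintype.card_fin]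
  have hinj : Function.Injective B.mulVecLin :=
    (LinearMap.injective_iff_surjective).mpr hsurj
  rw [isUnit_iff_ne_zero]
  intro hdet
  obtain ⟨v, hv, hv0⟩ := (Matrix.exists_mulVec_eq_zero_iff).mpr hdet
  exact hv (hinj (show B.mulVecLin v = B.mulVecLin 0 by simp [Matrix.mulVecLin_apply, hv0]))

theorem leverage_eq {n d : ℕ} (X : Matrix (Fin n) (Fin d) ℝ) (i : Fin n) :
    X i ⬝ᵥ ((Xᵀ * X).adjugate *ᵥ X i)
      = ∑ T ∈ (powersetCard d (univ : Finset (Fin n))).filter (fun T => i ∈ T),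
          (mnr X T)^2 := by
  set B := Xᵀ * X with hB
  rw [← Matrix.cramer_eq_adjugate_mulVec]
  rw [dotProduct]
  have hcr : ∀ k, Matrix.cramer B (X i) k = (B.updateCol k (X i)).det :=
    fun k => Matrix.cramer_apply B (X i) k
  have hupd : ∀ k : Fin d, B.updateCol k (X i)
      = Xᵀ * (X.updateCol k (fun m => if m = i then 1 else 0)) := by
    intro k
    ext j l
    rw [Matrix.updateCol_apply, Matrix.mul_apply]
    by_cases hl : l = k
    · subst hl
      rw [if_pos rfl]
      simp only [Matrix.transpose_apply, Matrix.updateCol_self, mul_ite, mul_one, mul_zero]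
      rw [Finset.sum_ite_eq' Finset.univ i (fun m => X m j)]
      simp
    · rw [if_neg hl, hB, Matrix.mul_apply]
      refine Finset.sum_congr rfl fun m _ => ?_
      rw [Matrix.updateCol_apply, if_neg hl]
  have hdet : ∀ k : Fin d, (B.updateCol k (X i)).det
      = ∑ T ∈ powersetCard d (univ : Finset (Fin n)),
          if h : T.card = d then
            mnr X T * (((X.updateCol k (fun m => if m = i then 1 else 0)).submatrix
              (T.orderEmbOfFin h) id)).det
          else 0 := by
    intro k
    rw [hupd k, cauchyBinet]
    refine Finset.sum_congr rfl fun T hT => ?_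
    have hTc : T.card = d := (Finset.mem_powersetCard.mp hT).2
    rw [dif_pos hTc, dif_pos hTc, mnr, dif_pos hTc]
    congr 1
    rw [show Xᵀ.submatrix id ⇑(T.orderEmbOfFin hTc)
      = (X.submatrix (⇑(T.orderEmbOfFin hTc)) id)ᵀ from rfl, Matrix.det_transpose]
  calc ∑ k, X i k * Matrix.cramer B (X i) k
      = ∑ T ∈ powersetCard d (univ : Finset (Fin n)), ∑ k, X i k *
          (if h : T.card = d then
            mnr X T * (((X.updateCol k (fun m => if m = i then 1 else 0)).submatrix
              (T.orderEmbOfFin h) id)).det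
          else 0) := by
        rw [Finset.sum_comm]
        refine Finset.sum_congr rfl fun k _ => ?_
        rw [hcr k, hdet k, Finset.mul_sum]
    _ = ∑ T ∈ (powersetCard d (univ : Finset (Fin n))).filter (fun T => i ∈ T),
          (mnr X T)^2 := by
        rw [← Finset.sum_filter_add_sum_filter_not
          (powersetCard d (univ : Finset (Fin n))) (fun T => i ∈ T)]
        have hzero : ∀ T ∈ (powersetCard d (univ : Finset (Fin n))).filter
            (fun T => i ∉ T), ∑ k, X i k *
            (if h : T.card = d then
              mnr X T * (((X.updateCol k (fun m => if m = i then 1 else 0)).submatrix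
                (T.orderEmbOfFin h) id)).det
            else 0) = 0 := by
          intro T hT
          rw [Finset.mem_filter] at hT
          have hTc : T.card = d := (Finset.mem_powersetCard.mp hT.1).2
          refine Finset.sum_eq_zero fun k _ => ?_
          rw [dif_pos hTc]
          have hcol : ((X.updateCol k (fun m => if m = i then 1 else 0)).submatrix
              (T.orderEmbOfFin hTc) id).det = 0 := by
            apply Matrix.det_eq_zero_of_column_eq_zero k
            intro r
            rw [Matrix.submatrix_apply, id_eq, Matrix.updateCol_self]
            rw [if_neg]
            intro hcontra
            exact hT.2 (hcontra ▸ Finset.orderEmbOfFin_mem T hTc r)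
          rw [hcol, mul_zero, mul_zero]
        rw [Finset.sum_eq_zero hzero, add_zero]
        refine Finset.sum_congr rfl fun T hT => ?_
        rw [Finset.mem_filter] at hT
        have hTc : T.card = d := (Finset.mem_powersetCard.mp hT.1).2
        have hiT : i ∈ T := hT.2
        set e := T.orderEmbOfFin hTc with he
        set M := X.submatrix (⇑e) id with hM
        set j₀ : Fin d := (T.orderIsoOfFin hTc).symm ⟨i, hiT⟩ with hj₀
        have hej₀ : e j₀ = i := by
          rw [he, ← Finset.coe_orderIsoOfFin_apply]
          simp [hj₀]
        have hbsingle : ∀ j : Fin d, (if e j = i then (1:ℝ) else 0) = (Pi.single j₀ 1 : Fin d → ℝ) j := by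
          intro j
          rw [Pi.single_apply]
          congr 1
          simp only [eq_iff_iff]
          constructor
          · intro hji; exact e.injective (by rw [hji, hej₀])
          · intro hjj; rw [hjj, hej₀]
        have hsub : ∀ k, (X.updateCol k (fun m => if m = i then 1 else 0)).submatrix (⇑e) id
            = M.updateCol k (Pi.single j₀ 1) := by
          intro k
          ext r c
          rw [Matrix.submatrix_apply, id_eq, Matrix.updateCol_apply,
            Matrix.updateCol_apply]
          by_cases hc : c = k
          · rw [if_pos hc, if_pos hc, hbsingle r]
          · rw [if_neg hc, if_neg hc, hM, Matrix.submatrix_apply, id_eq]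
        have hXiM : ∀ k, X i k = M j₀ k := by
          intro k
          rw [hM, Matrix.submatrix_apply, id_eq, hej₀]
        calc ∑ k, X i k * (if h : T.card = d then
              mnr X T * (((X.updateCol k (fun m => if m = i then 1 else 0)).submatrix
                (T.orderEmbOfFin h) id)).det else 0)
            = mnr X T * ∑ k, M j₀ k * (M.updateCol k (Pi.single j₀ 1)).det := by
              rw [Finset.mul_sum]
              refine Finset.sum_congr rfl fun k _ => ?_
              rw [dif_pos hTc, hsub k, hXiM k]
              ring
          _ = mnr X T * (M *ᵥ Matrix.cramer M (Pi.single j₀ 1)) j₀ := by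
              congr 1
          _ = (mnr X T)^2 := by
              rw [Matrix.mulVec_cramer M (Pi.single j₀ 1)]
              simp only [Pi.smul_apply, Pi.single_eq_same, smul_eq_mul, mul_one]
              rw [sq, mnr, dif_pos hTc]

/-- The marginal probability of index `i` under size-`s` volume sampling:
`P(i ∈ S) = (s−d)/(n−d) + ((n−s)/(n−d)) · x_i^⊤(X^⊤X)^{−1}x_i`. -/
theorem volume_sampling_marginal {n d : ℕ} (X : Matrix (Fin n) (Fin d) ℝ)
    (hrank : X.rank = d) (hdn : d < n) (s : ℕ) (hds : d ≤ s) (hsn : s ≤ n)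
    (i : Fin n) :
    ∑ S ∈ (Finset.powersetCard s (Finset.univ : Finset (Fin n))).filter (fun S => i ∈ S),
        (gram X S).det / (((n - d).choose (s - d) : ℝ) * (Xᵀ * X).det)
      = ((s : ℝ) - d) / ((n : ℝ) - d)
        + (((n : ℝ) - s) / ((n : ℝ) - d)) * (X i ⬝ᵥ (Xᵀ * X)⁻¹.mulVec (X i)) := by
  set G : ℝ := (Xᵀ * X).det with hG
  have hGunit : IsUnit G := isUnit_detG X hrank
  have hGne : G ≠ 0 := isUnit_iff_ne_zero.mp hGunit
  set L : ℝ := ∑ T ∈ (powersetCard d (univ : Finset (Fin n))).filter (fun T => i ∈ T),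
    (mnr X T)^2 with hL
  set C1 : ℕ := (n - d).choose (s - d) with hC1
  set N2 : ℕ := if d < s then (n - d - 1).choose (s - d - 1) else 0 with hN2
  have hC1ne : (C1 : ℝ) ≠ 0 := by
    have : 0 < C1 := Nat.choose_pos (Nat.sub_le_sub_right hsn d)
    exact_mod_cast this.ne'
  have hndne : ((n : ℝ) - d) ≠ 0 := by
    have : (d : ℝ) < n := by exact_mod_cast hdn
    linarith
  -- leverage value
  have hlev : X i ⬝ᵥ (Xᵀ * X)⁻¹.mulVec (X i) = L / G := by
    rw [Matrix.inv_def, Ring.inverse_eq_inv', Matrix.smul_mulVec, dotProduct_smul,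
      leverage_eq X i]
    rw [smul_eq_mul, div_eq_inv_mul, ← hG, ← hL]
  -- card of superset filters
  have hcard : ∀ T ∈ powersetCard d (univ : Finset (Fin n)),
      ((((powersetCard s (univ : Finset (Fin n))).filter (fun S => i ∈ S)).filter
        (fun S => T ⊆ S)).card : ℝ) = if i ∈ T then (C1 : ℝ) else (N2 : ℝ) := by
    intro T hT
    have hTc : T.card = d := (Finset.mem_powersetCard.mp hT).2
    rw [Finset.filter_filter]
    by_cases hiT : i ∈ T
    · rw [if_pos hiT]
      have : ((powersetCard s (univ : Finset (Fin n))).filter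
          (fun S => i ∈ S ∧ T ⊆ S)) = ((powersetCard s (univ : Finset (Fin n))).filter
          (fun S => T ⊆ S)) := by
        apply Finset.filter_congr
        intro S _
        simp only [and_iff_right_iff_imp]
        exact fun hTS => hTS hiT
      rw [this, card_supersets T (hTc ▸ hds), hTc]
    · rw [if_neg hiT]
      have heq : ((powersetCard s (univ : Finset (Fin n))).filter
          (fun S => i ∈ S ∧ T ⊆ S)) = ((powersetCard s (univ : Finset (Fin n))).filter
          (fun S => insert i T ⊆ S)) := by
        apply Finset.filter_congr
        intro S _
        simp only [Finset.insert_subset_iff]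
      rw [heq]
      by_cases hds' : d < s
      · rw [hN2, if_pos hds']
        have hins : (insert i T).card = d + 1 := by rw [Finset.card_insert_of_notMem hiT, hTc]
        rw [card_supersets (insert i T) (by rw [hins]; exact hds'), hins]
        norm_cast
      · have hsd : s = d := le_antisymm (not_lt.mp hds') hds
        rw [hN2, if_neg hds']
        have : ((powersetCard s (univ : Finset (Fin n))).filter
            (fun S => insert i T ⊆ S)) = ∅ := by
          rw [Finset.filter_eq_empty_iff]
          intro S hS
          intro hsub
          have h1 : (insert i T).card ≤ S.card := Finset.card_le_card hsub
          rw [Finset.card_insert_of_notMem hiT, hTc,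
            (Finset.mem_powersetCard_univ.mp hS : S.card = s), hsd] at h1
          omega
        rw [this]
        simp
  -- main sum computation
  have hsum : ∑ S ∈ (powersetCard s (univ : Finset (Fin n))).filter (fun S => i ∈ S),
      (gram X S).det = (C1 : ℝ) * L + (N2 : ℝ) * (G - L) := by
    have h1 : ∀ S ∈ (powersetCard s (univ : Finset (Fin n))).filter (fun S => i ∈ S),
        (gram X S).det = ∑ T ∈ powersetCard d S, (mnr X T)^2 := fun S _ => gram_det X S
    rw [Finset.sum_congr rfl h1, swap_sum]
    have h2 : ∀ T ∈ powersetCard d (univ : Finset (Fin n)),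
        ((((powersetCard s (univ : Finset (Fin n))).filter (fun S => i ∈ S)).filter
          (fun S => T ⊆ S)).card : ℝ) * (mnr X T)^2
        = (if i ∈ T then (C1 : ℝ) else (N2 : ℝ)) * (mnr X T)^2 := by
      intro T hT
      rw [hcard T hT]
    rw [Finset.sum_congr rfl h2]
    rw [← Finset.sum_filter_add_sum_filter_not
      (powersetCard d (univ : Finset (Fin n))) (fun T => i ∈ T)]
    have h3 : ∑ T ∈ (powersetCard d (univ : Finset (Fin n))).filter (fun T => i ∈ T),
        (if i ∈ T then (C1 : ℝ) else (N2 : ℝ)) * (mnr X T)^2 = (C1 : ℝ) * L := by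
      rw [hL, Finset.mul_sum]
      refine Finset.sum_congr rfl fun T hT => ?_
      rw [if_pos (Finset.mem_filter.mp hT).2]
    have h4 : ∑ T ∈ (powersetCard d (univ : Finset (Fin n))).filter (fun T => ¬ i ∈ T),
        (if i ∈ T then (C1 : ℝ) else (N2 : ℝ)) * (mnr X T)^2 = (N2 : ℝ) * (G - L) := by
      have hGL : G - L = ∑ T ∈ (powersetCard d (univ : Finset (Fin n))).filter
          (fun T => ¬ i ∈ T), (mnr X T)^2 := by
        rw [hG, detG_eq X, hL, ← Finset.sum_filter_add_sum_filter_not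
          (powersetCard d (univ : Finset (Fin n))) (fun T => i ∈ T)]
        ring
      rw [hGL, Finset.mul_sum]
      refine Finset.sum_congr rfl fun T hT => ?_
      rw [if_neg (Finset.mem_filter.mp hT).2]
    rw [h3, h4]
  -- the binomial identity
  have hE : ((s : ℝ) - d) * C1 = ((n : ℝ) - d) * N2 := by
    by_cases hds' : d < s
    · rw [hN2, if_pos hds']
      have hnat : (n - d) * ((n - d - 1).choose (s - d - 1)) = C1 * (s - d) := by
        have h := Nat.add_one_mul_choose_eq (n - d - 1) (s - d - 1)
        have e1 : n - d - 1 + 1 = n - d := by omega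
        have e2 : s - d - 1 + 1 = s - d := by omega
        rw [e1, e2] at h
        rw [hC1, h]
      have hnat2 : (s - d) * C1 = (n - d) * ((n - d - 1).choose (s - d - 1)) := by
        rw [mul_comm]; exact hnat.symm
      have hcast : ((s : ℝ) - d) = ((s - d : ℕ) : ℝ) := by
        rw [Nat.cast_sub hds]
      have hcast2 : ((n : ℝ) - d) = ((n - d : ℕ) : ℝ) := by
        rw [Nat.cast_sub hdn.le]
      rw [hcast, hcast2]
      exact_mod_cast hnat2
    · have hsd : s = d := le_antisymm (not_lt.mp hds') hds
      rw [hN2, if_neg hds', hsd]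
      simp
  -- final algebra
  rw [← Finset.sum_div, hsum, hlev]
  have h2 : ((s:ℝ) - d)/((n:ℝ) - d) + (((n:ℝ) - s)/((n:ℝ) - d))*(L/G)
      = (((s:ℝ) - d) * G + ((n:ℝ) - s) * L)/(((n:ℝ) - d) * G) := by
    field_simp
  rw [h2, div_eq_div_iff (mul_ne_zero hC1ne hGne) (mul_ne_zero hndne hGne)]
  linear_combination (-(G * (G - L))) * hE
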